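/- With notation as in the uniqueness statement for π̃ (conditions A–E with constants m₀,…,m_d all nonzero), every monomial y₀^{a₀} y₁^{a₁} ⋯ y_r^{a_r} of degree ≥ d can, using relations (A), (B), (C), be rewritten modulo lower-complexity terms so that its image under any map π̃ satisfying (A)–(E) is determined; in particular, any map satisfying (A)–(E) is determined on all of ℚ[y₀,…,y_r] by induction on degree and on the number of indices 1 ≤ i ≤ d with aᵢ = 0. -/

import Mathlib

open MvPolynomial

/-- Conditions (A)–(E) for the map `π̃ : ℚ[y₀,…,y_r] → ℚ[z₁,…,z_r]` of
Pommersheim's stellar subdivision formula.  Variables `y₀,…,y_r` are indexed by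
`Fin (r+1)` (with `yᵢ = X i`), variables `z₁,…,z_r` by `Fin r` (with
`z_{i+1} = X i`, so `z` and `y` indices are related by `Fin.succ`). -/
def SatisfiesABCDE (r d : ℕ) (m : ℕ → ℚ)
    (π : MvPolynomial (Fin (r + 1)) ℚ →ₗ[ℚ] MvPolynomial (Fin r) ℚ) : Prop :=
  (∀ (f : MvPolynomial (Fin (r + 1)) ℚ) (i : Fin r), d < (i : ℕ) + 1 →
    π (X i.succ * f) = X i * π f) ∧
  (∀ (f : MvPolynomial (Fin (r + 1)) ℚ) (i j : Fin r), (i : ℕ) + 1 ≤ d → (j : ℕ) + 1 ≤ d →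
    π (X i.succ * f) = (m ((i : ℕ) + 1) / m ((j : ℕ) + 1)) • π (X j.succ * f)
      + (X i - C (m ((i : ℕ) + 1) / m ((j : ℕ) + 1)) * X j) * π f) ∧
  (∀ (f : MvPolynomial (Fin (r + 1)) ℚ) (j : Fin r), (j : ℕ) + 1 ≤ d →
    π (X 0 * f) = -(m 0 / m ((j : ℕ) + 1)) • π (X j.succ * f)
      + (m 0 / m ((j : ℕ) + 1)) • (X j * π f)) ∧
  (∀ f : MvPolynomial (Fin (r + 1)) ℚ,
    π ((∏ i ∈ Finset.univ.filter (fun i : Fin r => (i : ℕ) + 1 ≤ d), X i.succ) * f) = 0) ∧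
  (∀ g : MvPolynomial (Fin r) ℚ, g.totalDegree ≤ d - 1 → π (rename Fin.succ g) = g)

namespace StellarAux

variable {r : ℕ}

/-- total degree of an exponent vector -/
def sdeg (a : Fin (r + 1) →₀ ℕ) : ℕ := a.sum fun _ n => n

/-- number of indices `1 ≤ i ≤ d` with exponent zero -/
def szeros (d : ℕ) (a : Fin (r + 1) →₀ ℕ) : ℕ :=
  (Finset.univ.filter (fun i : Fin r => (i : ℕ) + 1 ≤ d ∧ a i.succ = 0)).card

/-- the induction measure -/
def mes (d : ℕ) (a : Fin (r + 1) →₀ ℕ) : ℕ :=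
  sdeg a * sdeg a * (d + 2) + a 0 * (d + 2) + szeros d a

theorem sdeg_add (a b : Fin (r + 1) →₀ ℕ) : sdeg (a + b) = sdeg a + sdeg b :=
  Finsupp.sum_add_index' (fun _ => rfl) (fun _ _ _ => rfl)

theorem sdeg_single (i : Fin (r + 1)) (n : ℕ) : sdeg (Finsupp.single i n) = n :=
  Finsupp.sum_single_index rfl

theorem a0_le_sdeg (a : Fin (r + 1) →₀ ℕ) : a 0 ≤ sdeg a := by
  by_cases h : a 0 = 0
  · simp [h]
  · rw [sdeg, Finsupp.sum]
    exact Finset.single_le_sum (f := fun i => a i) (fun i _ => Nat.zero_le _)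
      (Finsupp.mem_support_iff.2 h)

theorem card_filter_le (d : ℕ) (p : Fin r → Prop) [DecidablePred p] :
    (Finset.univ.filter (fun i : Fin r => (i : ℕ) + 1 ≤ d ∧ p i)).card ≤ d := by
  calc (Finset.univ.filter (fun i : Fin r => (i : ℕ) + 1 ≤ d ∧ p i)).card
      ≤ (Finset.range d).card := by
        refine Finset.card_le_card_of_injOn (fun i : Fin r => (i : ℕ))
          (fun i hi => ?_) (fun x _ y _ h => Fin.val_injective h)
        simp only [Finset.mem_coe, Finset.mem_filter] at hi
        show (i : ℕ) ∈ Finset.range d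
        exact Finset.mem_range.2 (by omega)
    _ = d := Finset.card_range d

theorem szeros_le (d : ℕ) (a : Fin (r + 1) →₀ ℕ) : szeros d a ≤ d :=
  card_filter_le d _

theorem factor (a : Fin (r + 1) →₀ ℕ) (i : Fin (r + 1)) (h : a i ≠ 0) :
    a = Finsupp.single i 1 + (a - Finsupp.single i 1) := by
  ext k
  simp only [Finsupp.coe_add, Finsupp.coe_tsub, Pi.add_apply, Pi.sub_apply,
    Finsupp.single_apply]
  split_ifs with h'
  · subst h'; omega
  · omega

theorem mes_lt_of_sdeg_lt {d : ℕ} {a a' : Fin (r + 1) →₀ ℕ} (h : sdeg a' < sdeg a) :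
    mes d a' < mes d a := by
  have h1 := a0_le_sdeg a'
  have h2 := szeros_le d a'
  have key : mes d a' < (sdeg a' + 1) * (sdeg a' + 1) * (d + 2) := by
    unfold mes; nlinarith
  have h3 : (sdeg a' + 1) * (sdeg a' + 1) * (d + 2) ≤ sdeg a * sdeg a * (d + 2) :=
    Nat.mul_le_mul_right _ (Nat.mul_le_mul h h)
  calc mes d a' < (sdeg a' + 1) * (sdeg a' + 1) * (d + 2) := key
    _ ≤ sdeg a * sdeg a * (d + 2) := h3
    _ ≤ mes d a := by unfold mes; omega

theorem mes_lt_of_a0_lt {d : ℕ} {a a' : Fin (r + 1) →₀ ℕ} (h : sdeg a' = sdeg a)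
    (h2 : a' 0 < a 0) : mes d a' < mes d a := by
  have h3 := szeros_le d a'
  unfold mes
  rw [h, add_assoc, add_assoc]
  refine Nat.add_lt_add_left ?_ _
  have h4 : a' 0 * (d + 2) + (d + 2) ≤ a 0 * (d + 2) := by
    calc a' 0 * (d + 2) + (d + 2) = (a' 0 + 1) * (d + 2) := by ring
      _ ≤ a 0 * (d + 2) := Nat.mul_le_mul_right _ h2
  omega

theorem mes_lt_of_szeros_lt {d : ℕ} {a a' : Fin (r + 1) →₀ ℕ} (h : sdeg a' = sdeg a)
    (h0 : a' 0 = a 0) (hz : szeros d a' < szeros d a) : mes d a' < mes d a := by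
  unfold mes
  rw [h, h0]
  omega

theorem prod_X_eq (s : Finset (Fin r)) :
    (∏ i ∈ s, (X i.succ : MvPolynomial (Fin (r + 1)) ℚ)) =
      monomial (∑ i ∈ s, Finsupp.single i.succ 1) 1 := by
  induction s using Finset.cons_induction with
  | empty => simp
  | cons a s ha ih =>
      rw [Finset.prod_cons, Finset.sum_cons, ih, monomial_single_add, pow_one]

end StellarAux

open StellarAux in
theorem stellar_aux {r d : ℕ} (hd1 : 1 ≤ d) (hdr : d ≤ r) (m : ℕ → ℚ)
    (π₁ π₂ : MvPolynomial (Fin (r + 1)) ℚ →ₗ[ℚ] MvPolynomial (Fin r) ℚ)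
    (h₁ : SatisfiesABCDE r d m π₁) (h₂ : SatisfiesABCDE r d m π₂) :
    ∀ (n : ℕ) (a : Fin (r + 1) →₀ ℕ), mes d a ≤ n →
      π₁ (monomial a (1 : ℚ)) = π₂ (monomial a (1 : ℚ)) := by
  obtain ⟨hA₁, hB₁, hC₁, hD₁, hE₁⟩ := h₁
  obtain ⟨hA₂, hB₂, hC₂, hD₂, hE₂⟩ := h₂
  intro n
  induction n using Nat.strong_induction_on with
  | _ n ih =>
  intro a han
  by_cases h0 : a 0 = 0
  · by_cases hdeg : sdeg a ≤ d - 1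
    · -- Case (E)
      have hinj : Function.Injective (Fin.succ : Fin r → Fin (r + 1)) :=
        Fin.succ_injective r
      set a' : Fin r →₀ ℕ := Finsupp.comapDomain Fin.succ a hinj.injOn with ha'
      have hsup : ↑a.support ⊆ Set.range (Fin.succ : Fin r → Fin (r + 1)) := by
        intro k hk
        have hk' : a k ≠ 0 := Finsupp.mem_support_iff.1 (Finset.mem_coe.1 hk)
        have hk0 : k ≠ 0 := by rintro rfl; exact hk' h0
        obtain ⟨j, rfl⟩ := Fin.exists_succ_eq.2 hk0
        exact ⟨j, rfl⟩
      have hmap : Finsupp.mapDomain Fin.succ a' = a :=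
        Finsupp.mapDomain_comapDomain _ hinj a hsup
      have hmono : monomial a (1 : ℚ) = rename Fin.succ (monomial a' 1) := by
        rw [rename_monomial, hmap]
      have hdeg' : (monomial a' (1 : ℚ)).totalDegree ≤ d - 1 := by
        rw [totalDegree_monomial _ one_ne_zero]
        have hsum : a'.sum (fun _ e => e) = sdeg a := by
          rw [← hmap, sdeg, Finsupp.sum_mapDomain_index (fun _ => rfl) (fun _ _ _ => rfl)]
        rw [hsum]; exact hdeg
      rw [hmono, hE₁ _ hdeg', hE₂ _ hdeg']
    · by_cases hbig : ∃ k : Fin r, d < (k : ℕ) + 1 ∧ a k.succ ≠ 0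
      · -- Case (A)
        obtain ⟨k, hk, hak⟩ := hbig
        set a' := a - Finsupp.single k.succ 1 with ha'
        have hfac : a = Finsupp.single k.succ 1 + a' := factor a k.succ hak
        have hx : monomial a (1 : ℚ) = X k.succ * monomial a' 1 := by
          rw [hfac, monomial_single_add, pow_one]
        have hsd : sdeg a = 1 + sdeg a' := by rw [hfac, sdeg_add, sdeg_single]
        have hih : π₁ (monomial a' (1 : ℚ)) = π₂ (monomial a' (1 : ℚ)) := by
          refine ih (mes d a') (lt_of_lt_of_le (mes_lt_of_sdeg_lt ?_) han) a' le_rfl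
          omega
        rw [hx, hA₁ _ k hk, hA₂ _ k hk, hih]
      · push_neg at hbig
        by_cases hall : ∀ i : Fin r, (i : ℕ) + 1 ≤ d → a i.succ ≠ 0
        · -- Case (D)
          set s := Finset.univ.filter (fun i : Fin r => (i : ℕ) + 1 ≤ d) with hs
          set b : Fin (r + 1) →₀ ℕ := ∑ i ∈ s, Finsupp.single i.succ 1 with hb
          have hble : ∀ k, b k ≤ a k := by
            intro k
            rw [hb, Finsupp.finset_sum_apply]
            cases k using Fin.cases with
            | zero =>
                have : ∀ i ∈ s, (Finsupp.single i.succ (1 : ℕ)) 0 = 0 := by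
                  intro i _
                  simp [Finsupp.single_apply, (Fin.succ_ne_zero i)]
                rw [Finset.sum_congr rfl this]
                simp
            | succ j =>
                have h1 : ∀ i ∈ s, (Finsupp.single i.succ (1 : ℕ)) j.succ
                    = if i = j then 1 else 0 := by
                  intro i _
                  simp [Finsupp.single_apply, Fin.succ_inj]
                rw [Finset.sum_congr rfl h1, Finset.sum_ite_eq' s j (fun _ => 1)]
                split_ifs with hj
                · have := hall j (by simpa [hs] using hj)
                  omega
                · exact Nat.zero_le _
          have hfac : a = b + (a - b) := by
            ext k
            have := hble k
            simp only [Finsupp.coe_add, Finsupp.coe_tsub, Pi.add_apply, Pi.sub_apply]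
            omega
          have hx : monomial a (1 : ℚ)
              = (∏ i ∈ s, (X i.succ : MvPolynomial (Fin (r + 1)) ℚ)) * monomial (a - b) 1 := by
            rw [prod_X_eq, monomial_mul, one_mul, ← hb, ← hfac]
          rw [hx, hs, hD₁ _, hD₂ _]
        · -- Case (B)
          push_neg at hall
          obtain ⟨j, hjd, haj⟩ := hall
          have hdge : d ≤ sdeg a := by omega
          -- find i with a i.succ ≥ 2
          have hex : ∃ i : Fin r, (i : ℕ) + 1 ≤ d ∧ 2 ≤ a i.succ := by
            by_contra hno
            push_neg at hno
            set s := Finset.univ.filter (fun i : Fin r => (i : ℕ) + 1 ≤ d) with hs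
            have hjs : j ∈ s := by simp [hs, hjd]; omega
            have hsub : a.support ⊆ (s.erase j).image Fin.succ := by
              intro k hk
              rw [Finsupp.mem_support_iff] at hk
              have hk0 : k ≠ 0 := by rintro rfl; exact hk h0
              obtain ⟨i, rfl⟩ := Fin.exists_succ_eq.2 hk0
              have hid : (i : ℕ) + 1 ≤ d := by
                by_contra hc
                exact hk (hbig i (by omega))
              refine Finset.mem_image.2 ⟨i, Finset.mem_erase.2 ⟨?_, by simp [hs, hid]; omega⟩, rfl⟩
              rintro rfl; exact hk haj
            have hone : ∀ k ∈ a.support, a k ≤ 1 := by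
              intro k hk
              rw [Finsupp.mem_support_iff] at hk
              have hk0 : k ≠ 0 := by rintro rfl; exact hk h0
              obtain ⟨i, rfl⟩ := Fin.exists_succ_eq.2 hk0
              have hid : (i : ℕ) + 1 ≤ d := by
                by_contra hc
                exact hk (hbig i (by omega))
              have := hno i hid
              omega
            have h1 : sdeg a ≤ a.support.card := by
              rw [sdeg, Finsupp.sum]
              calc ∑ k ∈ a.support, a k ≤ a.support.card • 1 :=
                    Finset.sum_le_card_nsmul _ _ 1 hone
                _ = a.support.card := by simp
            have h2 : a.support.card ≤ (s.erase j).card :=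
              le_trans (Finset.card_le_card hsub) Finset.card_image_le
            have h3 : (s.erase j).card = s.card - 1 := Finset.card_erase_of_mem hjs
            have h4 : s.card ≤ d := by
              have := card_filter_le (r := r) d (fun _ => True)
              simpa [hs] using this
            have h5 : 1 ≤ s.card := Finset.card_pos.2 ⟨j, hjs⟩
            omega
          obtain ⟨i, hid, hai2⟩ := hex
          have hij : i ≠ j := by rintro rfl; omega
          set a' := a - Finsupp.single i.succ 1 with ha'
          have hfac : a = Finsupp.single i.succ 1 + a' := factor a i.succ (by omega)
          have hx : monomial a (1 : ℚ) = X i.succ * monomial a' 1 := by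
            rw [hfac, monomial_single_add, pow_one]
          have hsd : sdeg a = 1 + sdeg a' := by rw [hfac, sdeg_add, sdeg_single]
          -- pointwise values of a'
          have ha'val : ∀ k : Fin r, a' k.succ = a k.succ - (if i = k then 1 else 0) := by
            intro k
            rw [ha']
            simp [Finsupp.single_apply, Fin.succ_inj]
          have ha'0 : a' 0 = 0 := by
            rw [ha']
            simp [Finsupp.single_apply, Fin.succ_ne_zero i, h0]
          set a'' := Finsupp.single j.succ 1 + a' with ha''
          have hxx : X j.succ * monomial a' (1 : ℚ) = monomial a'' 1 := by
            rw [ha'', monomial_single_add, pow_one]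
          have ha''val : ∀ k : Fin r, a'' k.succ = (if j = k then 1 else 0) + a' k.succ := by
            intro k
            rw [ha'']
            simp [Finsupp.single_apply, Fin.succ_inj]
          have ha''0 : a'' 0 = 0 := by
            rw [ha'']
            simp [Finsupp.single_apply, Fin.succ_ne_zero j, ha'0]
          have hsd'' : sdeg a'' = sdeg a := by rw [ha'', sdeg_add, sdeg_single]; omega
          -- szeros decreases
          have hz : szeros d a'' < szeros d a := by
            have hset : Finset.univ.filter
                  (fun k : Fin r => (k : ℕ) + 1 ≤ d ∧ a k.succ = 0)
                = insert j (Finset.univ.filter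
                  (fun k : Fin r => (k : ℕ) + 1 ≤ d ∧ a'' k.succ = 0)) := by
              ext k
              simp only [Finset.mem_filter, Finset.mem_univ, true_and, Finset.mem_insert]
              constructor
              · rintro ⟨hkd, hk0⟩
                by_cases hkj : k = j
                · exact Or.inl hkj
                · refine Or.inr ⟨hkd, ?_⟩
                  have hki : i ≠ k := by rintro rfl; omega
                  have hkj' : j ≠ k := fun h => hkj h.symm
                  rw [ha''val k, ha'val k]
                  simp [hki, hkj', hk0]
              · rintro (rfl | ⟨hkd, hk0⟩)
                · exact ⟨hjd, haj⟩
                · have hkj : j ≠ k := by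
                    rintro rfl
                    rw [ha''val] at hk0
                    simp at hk0
                  have hki : i ≠ k := by
                    rintro rfl
                    rw [ha''val, ha'val] at hk0
                    simp [hkj] at hk0
                    omega
                  rw [ha''val k, ha'val k] at hk0
                  simp [hkj, hki] at hk0
                  exact ⟨hkd, hk0⟩
            have hjnot : j ∉ Finset.univ.filter
                (fun k : Fin r => (k : ℕ) + 1 ≤ d ∧ a'' k.succ = 0) := by
              simp only [Finset.mem_filter, Finset.mem_univ, true_and, not_and]
              intro _
              rw [ha''val j]
              simp
            rw [szeros, szeros, hset, Finset.card_insert_of_notMem hjnot]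
            omega
          have hih' : π₁ (monomial a' (1 : ℚ)) = π₂ (monomial a' (1 : ℚ)) := by
            refine ih (mes d a') (lt_of_lt_of_le (mes_lt_of_sdeg_lt (by omega)) han) a' le_rfl
          have hih'' : π₁ (X j.succ * monomial a' (1 : ℚ))
              = π₂ (X j.succ * monomial a' (1 : ℚ)) := by
            rw [hxx]
            refine ih (mes d a'')
              (lt_of_lt_of_le (mes_lt_of_szeros_lt hsd'' (by omega) hz) han) a'' le_rfl
          rw [hx, hB₁ _ i j hid hjd, hB₂ _ i j hid hjd, hih', hih'']
  · -- Case (C)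
    have hr : 0 < r := lt_of_lt_of_le hd1 hdr
    set j : Fin r := ⟨0, hr⟩ with hj
    have hjd : (j : ℕ) + 1 ≤ d := by simpa [hj] using hd1
    set a' := a - Finsupp.single 0 1 with ha'
    have hfac : a = Finsupp.single 0 1 + a' := factor a 0 h0
    have hx : monomial a (1 : ℚ) = X 0 * monomial a' 1 := by
      rw [hfac, monomial_single_add, pow_one]
    have hsd : sdeg a = 1 + sdeg a' := by rw [hfac, sdeg_add, sdeg_single]
    have ha'0 : a' 0 = a 0 - 1 := by
      rw [ha']; simp
    set a'' := Finsupp.single j.succ 1 + a' with ha''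
    have hxx : X j.succ * monomial a' (1 : ℚ) = monomial a'' 1 := by
      rw [ha'', monomial_single_add, pow_one]
    have hsd'' : sdeg a'' = sdeg a := by rw [ha'', sdeg_add, sdeg_single]; omega
    have ha''0 : a'' 0 = a 0 - 1 := by
      rw [ha'']
      simp [Finsupp.single_apply, Fin.succ_ne_zero j, ha'0]
    have hih' : π₁ (monomial a' (1 : ℚ)) = π₂ (monomial a' (1 : ℚ)) := by
      refine ih (mes d a') (lt_of_lt_of_le (mes_lt_of_sdeg_lt (by omega)) han) a' le_rfl
    have hih'' : π₁ (X j.succ * monomial a' (1 : ℚ))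
        = π₂ (X j.succ * monomial a' (1 : ℚ)) := by
      rw [hxx]
      refine ih (mes d a'')
        (lt_of_lt_of_le (mes_lt_of_a0_lt hsd'' (by omega)) han) a'' le_rfl
    rw [hx, hC₁ _ j hjd, hC₂ _ j hjd, hih', hih'']

/-- Any `ℚ`-linear map satisfying conditions (A)–(E) is determined on every
monomial `y₀^{a₀} ⋯ y_r^{a_r}` (in particular on those of degree ≥ d, which are
rewritten via (A), (B), (C), (D)); hence it is determined on all of
`ℚ[y₀,…,y_r]`. -/
theorem stellar_pushforward_determined_on_monomials {r d : ℕ}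
    (hd1 : 1 ≤ d) (hdr : d ≤ r)
    (m : ℕ → ℚ) (hm : ∀ i ≤ d, m i ≠ 0)
    (π₁ π₂ : MvPolynomial (Fin (r + 1)) ℚ →ₗ[ℚ] MvPolynomial (Fin r) ℚ)
    (h₁ : SatisfiesABCDE r d m π₁) (h₂ : SatisfiesABCDE r d m π₂) :
    (∀ a : Fin (r + 1) →₀ ℕ,
      π₁ (monomial a (1 : ℚ)) = π₂ (monomial a (1 : ℚ))) ∧ π₁ = π₂ := by
  have key : ∀ a : Fin (r + 1) →₀ ℕ,
      π₁ (monomial a (1 : ℚ)) = π₂ (monomial a (1 : ℚ)) :=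
    fun a => stellar_aux hd1 hdr m π₁ π₂ h₁ h₂ (StellarAux.mes d a) a le_rfl
  refine ⟨key, ?_⟩
  apply MvPolynomial.linearMap_ext
  intro s
  apply LinearMap.ext
  intro c
  have hc : (monomial s c : MvPolynomial (Fin (r + 1)) ℚ) = c • monomial s 1 := by
    rw [MvPolynomial.smul_monomial, smul_eq_mul, mul_one]
  simp only [LinearMap.coe_comp, Function.comp_apply]
  rw [hc, map_smul, map_smul, key s]
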